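/- For a > 1, m, n ∈ ℕ₊, and x, y ≥ 0, the second central moment is Ŷ_{m,n,a}((t−x)²; x, y) = x (m² x (a^{1/m}−1)² − (a^{1/m}−1) log a (2mx − 1) + x (log a)²) / (m² (a^{1/m}−1)²). -/

import Mathlib

open Real Filter

/-- One-dimensional Szász–Mirakjan type kernel. -/
noncomputable def szKernel (a : ℝ) (m : ℕ) (x : ℝ) (k : ℕ) : ℝ :=
  a ^ (-x / (a ^ ((m : ℝ)⁻¹) - 1)) * (x * Real.log a) ^ k /
    ((a ^ ((m : ℝ)⁻¹) - 1) ^ k * (k.factorial : ℝ))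

/-- Bivariate Szász–Mirakjan type operator. -/
noncomputable def szBiv (a : ℝ) (m n : ℕ) (f : ℝ → ℝ → ℝ) (x y : ℝ) : ℝ :=
  ∑' k₁ : ℕ, ∑' k₂ : ℕ,
    szKernel a m x k₁ * szKernel a n y k₂ * f ((k₁ : ℝ) / m) ((k₂ : ℝ) / n)

/-- Associated GBS (Generalized Boolean Sum) operator. -/
noncomputable def szGBS (a : ℝ) (m n : ℕ) (f : ℝ → ℝ → ℝ) (x y : ℝ) : ℝ :=
  ∑' k₁ : ℕ, ∑' k₂ : ℕ,
    szKernel a m x k₁ * szKernel a n y k₂ *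
      (f x ((k₂ : ℝ) / n) + f ((k₁ : ℝ) / m) y - f ((k₁ : ℝ) / m) ((k₂ : ℝ) / n))

lemma exp_tsum' (u : ℝ) : ∑' k : ℕ, u ^ k / (k.factorial : ℝ) = Real.exp u := by
  rw [Real.exp_eq_exp_ℝ, NormedSpace.exp_eq_tsum_div]

lemma summable_k_pow (u : ℝ) : Summable (fun k : ℕ => (k : ℝ) * (u ^ k / k.factorial)) := by
  rw [← (summable_nat_add_iff 1)]
  have : (fun k : ℕ => ((k + 1 : ℕ) : ℝ) * (u ^ (k + 1) / (k + 1).factorial)) =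
      fun k : ℕ => u * (u ^ k / k.factorial) := by
    funext k
    have h : ((k + 1).factorial : ℝ) = ((k + 1 : ℕ) : ℝ) * (k.factorial : ℝ) := by
      rw [Nat.factorial_succ]; push_cast; ring
    have hk1 : ((k + 1 : ℕ) : ℝ) ≠ 0 := by positivity
    have hf : (k.factorial : ℝ) ≠ 0 := by positivity
    field_simp [h]
    rw [h]
    push_cast
    ring
  rw [this]
  exact (Real.summable_pow_div_factorial u).mul_left u

lemma tsum_k_pow (u : ℝ) :
    ∑' k : ℕ, (k : ℝ) * (u ^ k / k.factorial) = u * Real.exp u := by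
  rw [Summable.tsum_eq_zero_add (summable_k_pow u)]
  have : (fun k : ℕ => ((k + 1 : ℕ) : ℝ) * (u ^ (k + 1) / (k + 1).factorial)) =
      fun k : ℕ => u * (u ^ k / k.factorial) := by
    funext k
    have h : ((k + 1).factorial : ℝ) = ((k + 1 : ℕ) : ℝ) * (k.factorial : ℝ) := by
      rw [Nat.factorial_succ]; push_cast; ring
    have hk1 : ((k + 1 : ℕ) : ℝ) ≠ 0 := by positivity
    have hf : (k.factorial : ℝ) ≠ 0 := by positivity
    field_simp [h]
    rw [h]
    push_cast
    ring
  simp only [this]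
  rw [tsum_mul_left, exp_tsum']
  simp

lemma summable_k2_pow (u : ℝ) :
    Summable (fun k : ℕ => (k : ℝ) ^ 2 * (u ^ k / k.factorial)) := by
  rw [← (summable_nat_add_iff 1)]
  have : (fun k : ℕ => ((k + 1 : ℕ) : ℝ) ^ 2 * (u ^ (k + 1) / (k + 1).factorial)) =
      fun k : ℕ => u * ((k : ℝ) * (u ^ k / k.factorial)) + u * (u ^ k / k.factorial) := by
    funext k
    have h : ((k + 1).factorial : ℝ) = ((k + 1 : ℕ) : ℝ) * (k.factorial : ℝ) := by
      rw [Nat.factorial_succ]; push_cast; ring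
    have hk1 : ((k + 1 : ℕ) : ℝ) ≠ 0 := by positivity
    have hf : (k.factorial : ℝ) ≠ 0 := by positivity
    field_simp [h]
    rw [h]
    push_cast
    ring
  rw [this]
  exact (((summable_k_pow u).mul_left u).add
    ((Real.summable_pow_div_factorial u).mul_left u))

lemma tsum_k2_pow (u : ℝ) :
    ∑' k : ℕ, (k : ℝ) ^ 2 * (u ^ k / k.factorial) = (u + u ^ 2) * Real.exp u := by
  rw [Summable.tsum_eq_zero_add (summable_k2_pow u)]
  have : (fun k : ℕ => ((k + 1 : ℕ) : ℝ) ^ 2 * (u ^ (k + 1) / (k + 1).factorial)) =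
      fun k : ℕ => u * ((k : ℝ) * (u ^ k / k.factorial)) + u * (u ^ k / k.factorial) := by
    funext k
    have h : ((k + 1).factorial : ℝ) = ((k + 1 : ℕ) : ℝ) * (k.factorial : ℝ) := by
      rw [Nat.factorial_succ]; push_cast; ring
    have hk1 : ((k + 1 : ℕ) : ℝ) ≠ 0 := by positivity
    have hf : (k.factorial : ℝ) ≠ 0 := by positivity
    field_simp [h]
    rw [h]
    push_cast
    ring
  simp only [this]
  rw [Summable.tsum_add (((summable_k_pow u).mul_left u))
    ((Real.summable_pow_div_factorial u).mul_left u), tsum_mul_left, tsum_mul_left,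
    exp_tsum', tsum_k_pow u]
  simp
  ring

/-- The kernel is a Poisson weight. -/
lemma szKernel_eq (a : ℝ) (ha : 1 < a) (m : ℕ) (hm : 0 < m) (x : ℝ) (k : ℕ) :
    szKernel a m x k =
      Real.exp (-(x * Real.log a / (a ^ ((m : ℝ)⁻¹) - 1))) *
        ((x * Real.log a / (a ^ ((m : ℝ)⁻¹) - 1)) ^ k / k.factorial) := by
  have ha0 : (0 : ℝ) < a := lt_trans one_pos ha
  have hb : (0 : ℝ) < a ^ ((m : ℝ)⁻¹) - 1 := by
    have : (1 : ℝ) < a ^ ((m : ℝ)⁻¹) :=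
      Real.one_lt_rpow_iff_of_pos ha0 |>.mpr (Or.inl ⟨ha, by positivity⟩)
    linarith
  have hbne : a ^ ((m : ℝ)⁻¹) - 1 ≠ 0 := ne_of_gt hb
  unfold szKernel
  rw [Real.rpow_def_of_pos ha0]
  have h1 : Real.log a * (-x / (a ^ ((m : ℝ)⁻¹) - 1)) =
      -(x * Real.log a / (a ^ ((m : ℝ)⁻¹) - 1)) := by ring
  rw [h1]
  rw [div_pow, mul_pow]
  have hf : (k.factorial : ℝ) ≠ 0 := by positivity
  field_simp

theorem stmt_4 (a : ℝ) (ha : 1 < a) (m n : ℕ) (hm : 0 < m) (hn : 0 < n)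
    (x y : ℝ) (hx : 0 ≤ x) (hy : 0 ≤ y) :
    szBiv a m n (fun t _ => (t - x) ^ 2) x y =
      x * ((m : ℝ) ^ 2 * x * (a ^ ((m : ℝ)⁻¹) - 1) ^ 2 -
            (a ^ ((m : ℝ)⁻¹) - 1) * Real.log a * (2 * m * x - 1) +
            x * (Real.log a) ^ 2) /
        ((m : ℝ) ^ 2 * (a ^ ((m : ℝ)⁻¹) - 1) ^ 2) := by
  have ha0 : (0 : ℝ) < a := lt_trans one_pos ha
  set b : ℝ := a ^ ((m : ℝ)⁻¹) - 1 with hbdef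
  set c : ℝ := a ^ ((n : ℝ)⁻¹) - 1 with hcdef
  have hb : (0 : ℝ) < b := by
    have : (1 : ℝ) < a ^ ((m : ℝ)⁻¹) :=
      Real.one_lt_rpow_iff_of_pos ha0 |>.mpr (Or.inl ⟨ha, by positivity⟩)
    simp only [hbdef]; linarith
  set u : ℝ := x * Real.log a / b with hudef
  set v : ℝ := y * Real.log a / c with hvdef
  have hK1 : ∀ k, szKernel a m x k = Real.exp (-u) * (u ^ k / k.factorial) :=
    fun k => szKernel_eq a ha m hm x k
  have hK2 : ∀ k, szKernel a n y k = Real.exp (-v) * (v ^ k / k.factorial) :=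
    fun k => szKernel_eq a ha n hn y k
  have hsum2 : ∑' k : ℕ, szKernel a n y k = 1 := by
    simp only [hK2]
    rw [tsum_mul_left, exp_tsum', ← Real.exp_add]
    simp
  unfold szBiv
  have step1 : ∀ k₁ : ℕ,
      (∑' k₂ : ℕ, szKernel a m x k₁ * szKernel a n y k₂ * (((k₁ : ℝ) / m) - x) ^ 2) =
      szKernel a m x k₁ * (((k₁ : ℝ) / m) - x) ^ 2 := by
    intro k₁
    have : (fun k₂ : ℕ => szKernel a m x k₁ * szKernel a n y k₂ * (((k₁ : ℝ) / m) - x) ^ 2) =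
        fun k₂ : ℕ => (szKernel a m x k₁ * (((k₁ : ℝ) / m) - x) ^ 2) * szKernel a n y k₂ := by
      funext k₂; ring
    rw [this, tsum_mul_left, hsum2, mul_one]
  simp only [step1]
  have expand : ∀ k : ℕ, szKernel a m x k * (((k : ℝ) / m) - x) ^ 2 =
      Real.exp (-u) * (((1 : ℝ) / (m : ℝ) ^ 2) * ((k : ℝ) ^ 2 * (u ^ k / k.factorial))
        + ((-(2 * x) / m) * ((k : ℝ) * (u ^ k / k.factorial))
        + x ^ 2 * (u ^ k / k.factorial))) := by
    intro k
    rw [hK1 k]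
    have hmne : (m : ℝ) ≠ 0 := Nat.cast_ne_zero.mpr hm.ne'
    field_simp
    ring
  simp only [expand]
  rw [tsum_mul_left, Summable.tsum_add ((summable_k2_pow u).mul_left _)
    (Summable.add ((summable_k_pow u).mul_left _)
      ((Real.summable_pow_div_factorial u).mul_left _)),
    Summable.tsum_add ((summable_k_pow u).mul_left _)
      ((Real.summable_pow_div_factorial u).mul_left _),
    tsum_mul_left, tsum_mul_left, tsum_mul_left, tsum_k2_pow, tsum_k_pow, exp_tsum']
  have hmne : (m : ℝ) ≠ 0 := Nat.cast_ne_zero.mpr hm.ne'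
  have key : Real.exp (-u) * (1 / (m : ℝ) ^ 2 * ((u + u ^ 2) * Real.exp u) +
      (-(2 * x) / m * (u * Real.exp u) + x ^ 2 * Real.exp u)) =
      (u + u ^ 2) / (m : ℝ) ^ 2 - 2 * x * u / m + x ^ 2 := by
    rw [Real.exp_neg]
    have hE : Real.exp u ≠ 0 := Real.exp_ne_zero u
    field_simp
    ring
  rw [key, hudef]
  have hbne : b ≠ 0 := ne_of_gt hb
  field_simp
  ring
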